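/- Let p be a probability vector on [K] with all entries positive, W an invertible K×K row-stochastic matrix, and p̂ₙ = Proj(t(Y₁,…,Yₙ)·W⁻¹) an estimator based on n i.i.d. samples Y₁,…,Yₙ with distribution pW, where Proj is any map into the simplex that fixes every point of the simplex. Then E[ ‖p̂ₙ − p‖₂² ] = (1/n)·Σ_{k=1}^{K} ( ν_{2,k} − p_k² ) + O( exp(−n·D(∂ℙW ‖ pW)) ). -/

import Mathlib

open Finset Filter Asymptotics

namespace RRStmt

def simplex (K : ℕ) : Set (Fin K → ℝ) :=
  {p | (∀ k, 0 ≤ p k) ∧ ∑ k, p k = 1}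

def simplexBoundary (K : ℕ) : Set (Fin K → ℝ) :=
  {p | p ∈ simplex K ∧ ∃ k, p k = 0}

/-- Kullback–Leibler divergence between two vectors on `Fin K`. -/
noncomputable def KL {K : ℕ} (u v : Fin K → ℝ) : ℝ :=
  ∑ k, u k * Real.log (u k / v k)

/-- Boundary information projection `D(∂ℙW ‖ pW)`. -/
noncomputable def Dbnd {K : ℕ} (p : Fin K → ℝ) (W : Matrix (Fin K) (Fin K) ℝ) : ℝ :=
  sInf ((fun r => KL (Matrix.vecMul r W) (Matrix.vecMul p W)) '' simplexBoundary K)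

/-- Empirical distribution (type) of a sample sequence. -/
noncomputable def empDist {K n : ℕ} (y : Fin n → Fin K) : Fin K → ℝ :=
  fun k => ((Finset.univ.filter fun i => y i = k).card : ℝ) / n

/-- Expectation of `g` under `n` i.i.d. samples with distribution `q`. -/
noncomputable def iidE {K : ℕ} (q : Fin K → ℝ) (n : ℕ) (g : (Fin n → Fin K) → ℝ) : ℝ :=
  ∑ y : Fin n → Fin K, (∏ i, q (y i)) * g y

open Classical in
/-- Probability of event `E` under `n` i.i.d. samples with distribution `q`. -/
noncomputable def iidP {K : ℕ} (q : Fin K → ℝ) (n : ℕ) (E : Set (Fin n → Fin K)) : ℝ :=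
  ∑ y : Fin n → Fin K, if y ∈ E then ∏ i, q (y i) else 0

def RowStochastic {K : ℕ} (W : Matrix (Fin K) (Fin K) ℝ) : Prop :=
  (∀ i j, 0 ≤ W i j) ∧ ∀ i, ∑ j, W i j = 1

def EpsPrivate {K : ℕ} (ε : ℝ) (W : Matrix (Fin K) (Fin K) ℝ) : Prop :=
  ∀ k k' l, W k l ≤ Real.exp ε * W k' l

def IsCirculant {K : ℕ} (W : Matrix (Fin K) (Fin K) ℝ) : Prop :=
  ∃ w : Fin K → ℝ, ∀ i j, W i j = w (j - i)

def IsPermMatrix {K : ℕ} (W : Matrix (Fin K) (Fin K) ℝ) : Prop :=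
  ∃ σ : Equiv.Perm (Fin K), ∀ i j, W i j = if σ i = j then 1 else 0

noncomputable def nu {K : ℕ} (p : Fin K → ℝ) (W : Matrix (Fin K) (Fin K) ℝ)
    (ρ : ℕ) (k : Fin K) : ℝ :=
  ∑ j, Matrix.vecMul p W j * (W⁻¹ j k) ^ ρ

noncomputable def Phi {K : ℕ} (W : Matrix (Fin K) (Fin K) ℝ) : Matrix (Fin K) (Fin K) ℝ :=
  W * Matrix.hadamard W⁻¹ W⁻¹

noncomputable def phiSum {K : ℕ} (W : Matrix (Fin K) (Fin K) ℝ) : ℝ :=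
  ∑ k, ∑ l, Phi W k l

noncomputable def stepMech (K : ℕ) (ε : ℝ) : Matrix (Fin K) (Fin K) ℝ :=
  Matrix.of fun i j => if i = j then Real.exp ε / (Real.exp ε + K - 1)
                       else 1 / (Real.exp ε + K - 1)



section Aux
variable {K : ℕ}

lemma iidE_prod (q : Fin K → ℝ) (n : ℕ) (F : Fin n → Fin K → ℝ) :
    iidE q n (fun y => ∏ i, F i (y i)) = ∏ i, ∑ j, q j * F i j := by
  unfold iidE
  rw [Finset.prod_univ_sum, Fintype.piFinset_univ]
  refine Finset.sum_congr rfl fun y _ => ?_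
  rw [← Finset.prod_mul_distrib]

lemma iidE_sum (q : Fin K → ℝ) (n : ℕ) {ι : Type*} (s : Finset ι)
    (G : ι → (Fin n → Fin K) → ℝ) :
    iidE q n (fun y => ∑ k ∈ s, G k y) = ∑ k ∈ s, iidE q n (G k) := by
  unfold iidE
  simp_rw [Finset.mul_sum]
  exact Finset.sum_comm

lemma iidE_const_mul (q : Fin K → ℝ) (n : ℕ) (c : ℝ) (g : (Fin n → Fin K) → ℝ) :
    iidE q n (fun y => c * g y) = c * iidE q n g := by
  unfold iidE
  rw [Finset.mul_sum]
  refine Finset.sum_congr rfl fun y _ => by ring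

lemma iidE_pair (q : Fin K → ℝ) (hq1 : ∑ j, q j = 1) (n : ℕ) (f g : Fin K → ℝ)
    (i i' : Fin n) :
    iidE q n (fun y => f (y i) * g (y i')) =
      if i = i' then ∑ j, q j * (f j * g j)
      else (∑ j, q j * f j) * (∑ j, q j * g j) := by
  have key : (fun y : Fin n → Fin K => f (y i) * g (y i'))
      = fun y => ∏ i'', ((if i'' = i then f (y i'') else 1) * (if i'' = i' then g (y i'') else 1)) := by
    funext y
    rw [Finset.prod_mul_distrib, Finset.prod_ite_eq' Finset.univ i (fun j => f (y j)),
      Finset.prod_ite_eq' Finset.univ i' (fun j => g (y j))]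
    simp
  rw [key, iidE_prod q n (fun i'' j => (if i'' = i then f j else 1) * (if i'' = i' then g j else 1))]
  by_cases h : i = i'
  · subst h
    simp only [if_pos rfl]
    rw [Finset.prod_eq_single i]
    · refine Finset.sum_congr rfl fun j _ => by simp
    · intro b _ hb
      simp [hb, hq1, ← Finset.sum_congr rfl (fun j _ => (mul_one (q j)))]
    · simp
  · simp only [if_neg h]
    have houter : ∀ i'' : Fin n, i'' ∉ ({i, i'} : Finset (Fin n)) →
        (∑ j, q j * ((if i'' = i then f j else 1) * (if i'' = i' then g j else 1))) = 1 := by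
      intro i'' hmem
      simp only [Finset.mem_insert, Finset.mem_singleton, not_or] at hmem
      simp [hmem.1, hmem.2, hq1]
    rw [← Finset.prod_subset (Finset.subset_univ ({i, i'} : Finset (Fin n)))
      (fun x _ hx => houter x hx)]
    rw [Finset.prod_pair h]
    have : ∀ j, (if i = i' then f j else 1) = 1 := fun j => if_neg h
    simp [h, Ne.symm h]

lemma iidE_sq (q : Fin K → ℝ) (hq1 : ∑ j, q j = 1) (n : ℕ) (f : Fin K → ℝ)
    (hf : ∑ j, q j * f j = 0) :
    iidE q n (fun y => (∑ i, f (y i)) ^ 2) = n * ∑ j, q j * f j ^ 2 := by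
  have h1 : (fun y : Fin n → Fin K => (∑ i, f (y i)) ^ 2)
      = fun y => ∑ i, ∑ i', f (y i) * f (y i') := by
    funext y; rw [sq, Finset.sum_mul_sum]
  rw [h1, iidE_sum]
  have : ∀ i : Fin n, iidE q n (fun y => ∑ i', f (y i) * f (y i'))
      = ∑ i' : Fin n, iidE q n (fun y => f (y i) * f (y i')) := fun i => iidE_sum q n _ _
  simp_rw [this, iidE_pair q hq1 n f f, hf]
  simp [Finset.sum_ite_eq, sq]


lemma sum_comp_emp {n : ℕ} (y : Fin n → Fin K) (h : Fin K → ℝ) :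
    ∑ i, h (y i) = ∑ j, ((Finset.univ.filter fun i => y i = j).card : ℝ) * h j := by
  rw [← Finset.sum_fiberwise Finset.univ y (fun i => h (y i))]
  refine Finset.sum_congr rfl fun j _ => ?_
  have hc : ∑ i ∈ Finset.univ.filter fun i => y i = j, h (y i)
      = ∑ i ∈ Finset.univ.filter fun i => y i = j, h j :=
    Finset.sum_congr rfl fun i hi => by rw [(Finset.mem_filter.mp hi).2]
  rw [hc, Finset.sum_const, nsmul_eq_mul]

lemma emp_vecMul {n : ℕ} (y : Fin n → Fin K) (A : Matrix (Fin K) (Fin K) ℝ) (k : Fin K) :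
    Matrix.vecMul (empDist y) A k = (1 / n) * ∑ i, A (y i) k := by
  rw [sum_comp_emp y (fun j => A j k)]
  simp only [Matrix.vecMul, dotProduct, empDist]
  rw [Finset.mul_sum]
  refine Finset.sum_congr rfl fun j _ => by ring

lemma emp_nonneg {n : ℕ} (y : Fin n → Fin K) (k : Fin K) : 0 ≤ empDist y k := by
  unfold empDist; positivity

lemma emp_le_one {n : ℕ} (y : Fin n → Fin K) (k : Fin K) : empDist y k ≤ 1 := by
  unfold empDist
  rcases Nat.eq_zero_or_pos n with h | h
  · subst h; simp
  · rw [div_le_one (by exact_mod_cast h)]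
    exact_mod_cast (Finset.card_filter_le _ _).trans (le_of_eq (Finset.card_univ.trans (Fintype.card_fin n)))

lemma emp_sum {n : ℕ} (hn : 1 ≤ n) (y : Fin n → Fin K) : ∑ k, empDist y k = 1 := by
  unfold empDist
  rw [← Finset.sum_div]
  rw [div_eq_one_iff_eq (by exact_mod_cast Nat.one_le_iff_ne_zero.mp hn)]
  rw [← Nat.cast_sum]
  norm_cast
  have := Finset.card_eq_sum_card_fiberwise (f := y) (s := Finset.univ) (t := Finset.univ)
    (fun x _ => Finset.mem_univ (y x))
  rw [Finset.card_univ, Fintype.card_fin] at this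
  exact this.symm


lemma expectation_unproj (n : ℕ) (hn : 1 ≤ n) (q : Fin K → ℝ) (hq1 : ∑ j, q j = 1)
    (A : Matrix (Fin K) (Fin K) ℝ) (p : Fin K → ℝ) (hpA : ∀ k, ∑ j, q j * A j k = p k) :
    iidE q n (fun y => ∑ k, (Matrix.vecMul (empDist y) A k - p k) ^ 2)
      = (1 / n) * ∑ k, ((∑ j, q j * (A j k) ^ 2) - p k ^ 2) := by
  have hn0 : (n : ℝ) ≠ 0 := by exact_mod_cast Nat.one_le_iff_ne_zero.mp hn
  have hrw : ∀ (k : Fin K) (y : Fin n → Fin K),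
      Matrix.vecMul (empDist y) A k - p k = (1 / n) * ∑ i, (A (y i) k - p k) := by
    intro k y
    rw [emp_vecMul, Finset.sum_sub_distrib, Finset.sum_const, Finset.card_univ,
      Fintype.card_fin, nsmul_eq_mul, mul_sub]
    congr 1
    rw [one_div, ← mul_assoc, inv_mul_cancel₀ hn0, one_mul]
  have hloss : (fun y : Fin n → Fin K => ∑ k, (Matrix.vecMul (empDist y) A k - p k) ^ 2)
      = fun y => ∑ k, (1 / (n:ℝ)) ^ 2 * (∑ i, (A (y i) k - p k)) ^ 2 := by
    funext y
    refine Finset.sum_congr rfl fun k _ => ?_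
    rw [hrw k y, mul_pow]
  rw [hloss, iidE_sum]
  have hmean : ∀ k : Fin K, ∑ j, q j * (A j k - p k) = 0 := by
    intro k
    simp_rw [mul_sub]
    rw [Finset.sum_sub_distrib, hpA k, ← Finset.sum_mul, hq1, one_mul, sub_self]
  have hterm : ∀ k : Fin K,
      iidE q n (fun y => (1 / (n:ℝ)) ^ 2 * (∑ i, (A (y i) k - p k)) ^ 2)
        = (1 / n) * ((∑ j, q j * (A j k) ^ 2) - p k ^ 2) := by
    intro k
    rw [iidE_const_mul, iidE_sq q hq1 n (fun j => A j k - p k) (hmean k)]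
    have hvar : ∑ j, q j * (A j k - p k) ^ 2 = (∑ j, q j * (A j k) ^ 2) - p k ^ 2 := by
      have hh : ∀ j : Fin K, q j * (A j k - p k) ^ 2
          = q j * (A j k) ^ 2 - 2 * p k * (q j * A j k) + p k ^ 2 * q j := fun j => by ring
      simp_rw [hh]
      rw [Finset.sum_add_distrib, Finset.sum_sub_distrib, ← Finset.mul_sum, ← Finset.mul_sum,
        hpA k, hq1]
      ring
    rw [hvar]
    field_simp
  rw [Finset.sum_congr rfl (fun k _ => hterm k), ← Finset.mul_sum]

lemma abs_iidE_sub_le (q : Fin K → ℝ) (hq0 : ∀ j, 0 ≤ q j) (n : ℕ)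
    (g h : (Fin n → Fin K) → ℝ) (B : Set (Fin n → Fin K)) (C : ℝ)
    (heq : ∀ y, y ∉ B → g y = h y) (hbd : ∀ y, |g y - h y| ≤ C) :
    |iidE q n g - iidE q n h| ≤ C * iidP q n B := by
  classical
  unfold iidE iidP
  rw [← Finset.sum_sub_distrib]
  have hre : ∀ y : Fin n → Fin K,
      (∏ i, q (y i)) * g y - (∏ i, q (y i)) * h y = (∏ i, q (y i)) * (g y - h y) := fun y => by ring
  simp_rw [hre]
  refine (Finset.abs_sum_le_sum_abs _ _).trans ?_
  rw [Finset.mul_sum]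
  refine Finset.sum_le_sum fun y _ => ?_
  have hq : 0 ≤ ∏ i, q (y i) := Finset.prod_nonneg fun i _ => hq0 _
  rw [abs_mul, abs_of_nonneg hq]
  by_cases hy : y ∈ B
  · rw [if_pos hy, mul_comm C]
    exact mul_le_mul_of_nonneg_left (hbd y) hq
  · rw [if_neg hy, mul_zero, heq y hy, sub_self, abs_zero, mul_zero]

lemma iidP_le_sum (q : Fin K → ℝ) (hq0 : ∀ j, 0 ≤ q j) (n : ℕ)
    (B : Set (Fin n → Fin K)) (Bk : Fin K → Set (Fin n → Fin K))
    (hsub : ∀ y ∈ B, ∃ k, y ∈ Bk k) :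
    iidP q n B ≤ ∑ k, iidP q n (Bk k) := by
  classical
  unfold iidP
  rw [Finset.sum_comm]
  refine Finset.sum_le_sum fun y _ => ?_
  have hq : 0 ≤ ∏ i, q (y i) := Finset.prod_nonneg fun i _ => hq0 _
  by_cases hy : y ∈ B
  · rw [if_pos hy]
    obtain ⟨k, hk⟩ := hsub y hy
    have : (if y ∈ Bk k then ∏ i, q (y i) else 0) = ∏ i, q (y i) := if_pos hk
    calc (∏ i, q (y i)) = (if y ∈ Bk k then ∏ i, q (y i) else 0) := this.symm
      _ ≤ ∑ k', (if y ∈ Bk k' then ∏ i, q (y i) else 0) :=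
        Finset.single_le_sum (f := fun k' => if y ∈ Bk k' then ∏ i, q (y i) else 0)
          (fun k' _ => by positivity) (Finset.mem_univ k)
  · rw [if_neg hy]
    exact Finset.sum_nonneg fun k' _ => by positivity

lemma chernoff (q : Fin K → ℝ) (hq0 : ∀ j, 0 ≤ q j) (n : ℕ) (f : Fin K → ℝ)
    (lam : ℝ) (hlam : 0 ≤ lam) :
    iidP q n {y | ∑ i, f (y i) < 0} ≤ (∑ j, q j * Real.exp (-lam * f j)) ^ n := by
  classical
  have key : iidP q n {y | ∑ i, f (y i) < 0}
      ≤ iidE q n (fun y => ∏ i, Real.exp (-lam * f (y i))) := by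
    unfold iidE iidP
    refine Finset.sum_le_sum fun y _ => ?_
    have hq : 0 ≤ ∏ i, q (y i) := Finset.prod_nonneg fun i _ => hq0 _
    by_cases hy : y ∈ {y : Fin n → Fin K | ∑ i, f (y i) < 0}
    · rw [if_pos hy]
      have hsum : (0:ℝ) ≤ ∑ i, -lam * f (y i) := by
        rw [← Finset.mul_sum]
        have : ∑ i, f (y i) < 0 := hy
        nlinarith
      have h1 : (1:ℝ) ≤ ∏ i, Real.exp (-lam * f (y i)) := by
        rw [← Real.exp_sum]
        exact Real.one_le_exp hsum
      nlinarith
    · rw [if_neg hy]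
      positivity
  refine key.trans ?_
  rw [iidE_prod q n (fun _ j => Real.exp (-lam * f j)), Finset.prod_const, Finset.card_univ,
    Fintype.card_fin]


lemma KL_nonneg (u v : Fin K → ℝ) (hu : ∀ k, 0 ≤ u k) (hv : ∀ k, 0 < v k)
    (hsum : ∑ k, v k ≤ ∑ k, u k) : 0 ≤ KL u v := by
  have hterm : ∀ k, u k - v k ≤ u k * Real.log (u k / v k) := by
    intro k
    rcases eq_or_lt_of_le (hu k) with h | h
    · rw [← h]
      simp only [zero_mul]
      linarith [hv k]
    · have hlog : Real.log (v k / u k) ≤ v k / u k - 1 :=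
        Real.log_le_sub_one_of_pos (div_pos (hv k) h)
    
      have hneg : Real.log (u k / v k) = - Real.log (v k / u k) := by
        rw [← Real.log_inv]
        congr 1
        field_simp
      have h2 : 1 - v k / u k ≤ Real.log (u k / v k) := by
        rw [hneg]; linarith
      calc u k - v k = u k * (1 - v k / u k) := by field_simp
        _ ≤ u k * Real.log (u k / v k) := mul_le_mul_of_nonneg_left h2 h.le
  calc (0:ℝ) ≤ ∑ k, u k - ∑ k, v k := by linarith
    _ = ∑ k, (u k - v k) := by rw [Finset.sum_sub_distrib]
    _ ≤ ∑ k, u k * Real.log (u k / v k) := Finset.sum_le_sum fun k _ => hterm k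
    _ = KL u v := rfl

lemma kl_term_convex (c b mu : ℝ) (hc : 0 < c) (hb : 0 < b) (h0 : 0 ≤ mu) (h1 : mu ≤ 1) :
    ((1 - mu) * c + mu * b) * Real.log (((1 - mu) * c + mu * b) / c)
      ≤ mu * (b * Real.log (b / c)) := by
  set a := (1 - mu) * c + mu * b with ha
  have hapos : 0 < a := by rcases le_total c b with h | h <;> nlinarith
  have hconv := Real.convexOn_mul_log.2 (Set.mem_Ici.mpr hc.le) (Set.mem_Ici.mpr hb.le)
      (by linarith : (0:ℝ) ≤ 1 - mu) h0 (by ring)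
  simp only [smul_eq_mul] at hconv
  rw [← ha] at hconv
  have hlog : ∀ x : ℝ, 0 < x → x * Real.log (x / c) = x * Real.log x - x * Real.log c := by
    intro x hx; rw [Real.log_div hx.ne' hc.ne']; ring
  rw [hlog a hapos, hlog b hb]
  have hexp : a * Real.log c = (1 - mu) * (c * Real.log c) + mu * (b * Real.log c) := by
    rw [ha]; ring
  have hgoal2 : mu * (b * Real.log b - b * Real.log c)
      = mu * (b * Real.log b) - mu * (b * Real.log c) := by ring
  rw [hgoal2]
  linarith [hconv, hexp]

lemma Dbnd_le_KL (p : Fin K → ℝ) (hp : ∀ k, 0 < p k) (hpsum : ∑ k, p k = 1)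
    (W : Matrix (Fin K) (Fin K) ℝ) (hW0 : ∀ i j, 0 ≤ W i j)
    (hWrow : ∀ i, ∑ j, W i j = 1) (hWinvrow : ∀ i, ∑ j, W⁻¹ i j = 1)
    (hWW : W⁻¹ * W = 1)
    (hq0 : ∀ j, 0 < Matrix.vecMul p W j)
    (s : Fin K → ℝ) (hs0 : ∀ j, 0 < s j) (hs1 : ∑ j, s j = 1) (k : Fin K)
    (hrk : Matrix.vecMul s W⁻¹ k = 0) :
    Dbnd p W ≤ KL s (Matrix.vecMul p W) := by
  classical
  set q : Fin K → ℝ := Matrix.vecMul p W with hqdef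
  have hvecM : ∀ (v : Fin K → ℝ) (M : Matrix (Fin K) (Fin K) ℝ) (j : Fin K),
      Matrix.vecMul v M j = ∑ l, v l * M l j := by
    intro v M j; simp [Matrix.vecMul, dotProduct]
  have hsumW : ∀ v : Fin K → ℝ, ∑ j, Matrix.vecMul v W j = ∑ l, v l := by
    intro v
    simp_rw [hvecM]
    rw [Finset.sum_comm]
    simp_rw [← Finset.mul_sum, hWrow, mul_one]
  have hsumWinv : ∀ v : Fin K → ℝ, ∑ j, Matrix.vecMul v W⁻¹ j = ∑ l, v l := by
    intro v
    simp_rw [hvecM]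
    rw [Finset.sum_comm]
    simp_rw [← Finset.mul_sum, hWinvrow, mul_one]
  have hq1 : ∑ j, q j = 1 := by rw [hqdef, hsumW, hpsum]
  set r : Fin K → ℝ := Matrix.vecMul s W⁻¹ with hrdef
  have hrW : Matrix.vecMul r W = s := by
    rw [hrdef, Matrix.vecMul_vecMul, hWW, Matrix.vecMul_one]
  have hrsum : ∑ l, r l = 1 := by rw [hrdef, hsumWinv, hs1]
  have hKLs : 0 ≤ KL s q :=
    KL_nonneg s q (fun j => (hs0 j).le) hq0 (by rw [hq1, hs1])
  have hbdd : BddBelow ((fun r' => KL (Matrix.vecMul r' W) q) '' simplexBoundary K) := by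
    refine ⟨0, fun x hx => ?_⟩
    obtain ⟨r', hr', rfl⟩ := hx
    refine KL_nonneg _ _ (fun j => ?_) hq0 ?_
    · rw [hvecM]
      exact Finset.sum_nonneg fun l _ => mul_nonneg (hr'.1.1 l) (hW0 l j)
    · rw [hsumW r', hr'.1.2]
      exact le_of_eq hq1
  -- main: find boundary point rb with KL (vecMul rb W) q ≤ KL s q
  suffices hmain : ∃ rb ∈ simplexBoundary K, KL (Matrix.vecMul rb W) q ≤ KL s q by
    obtain ⟨rb, hrb, hle⟩ := hmain
    exact le_trans (csInf_le hbdd ⟨rb, hrb, rfl⟩) hle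
  by_cases hS : (Finset.univ.filter fun l => r l < 0).Nonempty
  · obtain ⟨l0, hl0mem, hl0min⟩ :=
      Finset.exists_min_image _ (fun l => p l / (p l - r l)) hS
    have hrl0 : r l0 < 0 := (Finset.mem_filter.mp hl0mem).2
    set mu : ℝ := p l0 / (p l0 - r l0) with hmu
    have hden0 : 0 < p l0 - r l0 := by linarith [hp l0]
    have hmu0 : 0 < mu := div_pos (hp l0) hden0
    have hmu1 : mu < 1 := by
      rw [hmu, div_lt_one hden0]; linarith
    set rb : Fin K → ℝ := fun l => (1 - mu) * p l + mu * r l with hrb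
    have hrbmem : rb ∈ simplexBoundary K := by
      refine ⟨⟨fun l => ?_, ?_⟩, ⟨l0, ?_⟩⟩
      · by_cases hneg : r l < 0
        · have hlmem : l ∈ Finset.univ.filter fun l => r l < 0 :=
            Finset.mem_filter.mpr ⟨Finset.mem_univ l, hneg⟩
          have hmin := hl0min l hlmem
          have hdenl : 0 < p l - r l := by linarith [hp l]
          have hkey : mu * (p l - r l) ≤ p l := (le_div_iff₀ hdenl).mp hmin
          rw [hrb]; dsimp only; nlinarith
        · push_neg at hneg
          rw [hrb]; dsimp only
          nlinarith [hp l]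
      · rw [hrb]
        simp only
        rw [Finset.sum_add_distrib, ← Finset.mul_sum, ← Finset.mul_sum, hpsum, hrsum]
        ring
      · rw [hrb]; dsimp only; rw [hmu]; field_simp; ring
    have hrbW : ∀ j, Matrix.vecMul rb W j = (1 - mu) * q j + mu * s j := by
      intro j
      rw [hvecM, hqdef, hvecM]
      have hsj : s j = ∑ l, r l * W l j := by rw [← hrW, hvecM]
      rw [hsj, Finset.mul_sum, Finset.mul_sum, ← Finset.sum_add_distrib]
      refine Finset.sum_congr rfl fun l _ => ?_
      rw [hrb]; dsimp only; ring
    refine ⟨rb, hrbmem, ?_⟩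
    have hKLle : KL (Matrix.vecMul rb W) q ≤ mu * KL s q := by
      unfold KL
      rw [Finset.mul_sum]
      refine Finset.sum_le_sum fun j _ => ?_
      rw [hrbW j]
      exact kl_term_convex (q j) (s j) mu (hq0 j) (hs0 j) hmu0.le hmu1.le
    calc KL (Matrix.vecMul rb W) q ≤ mu * KL s q := hKLle
      _ ≤ 1 * KL s q := mul_le_mul_of_nonneg_right hmu1.le hKLs
      _ = KL s q := one_mul _
  · refine ⟨r, ⟨⟨fun l => ?_, hrsum⟩, ⟨k, hrk⟩⟩, ?_⟩
    · by_contra hneg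
      push_neg at hneg
      exact hS ⟨l, Finset.mem_filter.mpr ⟨Finset.mem_univ l, hneg⟩⟩
    · rw [hrW]


lemma exists_tilt (q f : Fin K → ℝ) (hq0 : ∀ j, 0 < q j)
    (hmean : 0 < ∑ j, q j * f j) (j0 : Fin K) (hj0 : f j0 < 0) :
    ∃ lam : ℝ, 0 ≤ lam ∧ ∑ j, q j * f j * Real.exp (-lam * f j) = 0 := by
  set h : ℝ → ℝ := fun lam => ∑ j, q j * f j * Real.exp (-lam * f j) with hh
  have hcont : Continuous h := by
    apply continuous_finset_sum
    intro j _
    have : Continuous fun lam : ℝ => Real.exp (-lam * f j) := by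
      apply Real.continuous_exp.comp
      exact (continuous_neg.mul continuous_const)
    exact continuous_const.mul this
  have h0pos : 0 < h 0 := by
    rw [hh]
    simpa using hmean
  -- choose a large Lambda where h is negative
  set c : ℝ := -f j0 with hc
  have hcpos : 0 < c := by rw [hc]; linarith
  set S : ℝ := ∑ j, q j * max (f j) 0 with hS
  have hSnonneg : 0 ≤ S :=
    Finset.sum_nonneg fun j _ => mul_nonneg (hq0 j).le (le_max_right _ _)
  set Lam : ℝ := max (Real.log ((S + 1) / (q j0 * c)) / c) 0 with hLam
  have hLam0 : 0 ≤ Lam := le_max_right _ _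
  have hexpLam : (S + 1) / (q j0 * c) ≤ Real.exp (Lam * c) := by
    have harg : 0 < (S + 1) / (q j0 * c) := div_pos (by linarith) (mul_pos (hq0 j0) hcpos)
    have h1 : Real.log ((S + 1) / (q j0 * c)) ≤ Lam * c := by
      have : Real.log ((S + 1) / (q j0 * c)) / c ≤ Lam := le_max_left _ _
      calc Real.log ((S + 1) / (q j0 * c))
          = (Real.log ((S + 1) / (q j0 * c)) / c) * c := by field_simp
        _ ≤ Lam * c := mul_le_mul_of_nonneg_right this hcpos.le
    calc (S + 1) / (q j0 * c) = Real.exp (Real.log ((S + 1) / (q j0 * c))) :=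
          (Real.exp_log harg).symm
      _ ≤ Real.exp (Lam * c) := Real.exp_le_exp.mpr h1
  have hj0term : q j0 * f j0 * Real.exp (-Lam * f j0) ≤ -(S + 1) := by
    have hexp : Real.exp (-Lam * f j0) = Real.exp (Lam * c) := by
      congr 1; rw [hc]; ring
    rw [hexp]
    have hqc : 0 < q j0 * c := mul_pos (hq0 j0) hcpos
    have h2 : S + 1 ≤ q j0 * c * Real.exp (Lam * c) := by
      rw [div_le_iff₀ hqc] at hexpLam
      linarith [hexpLam]
    have h3 : q j0 * f j0 * Real.exp (Lam * c) = -(q j0 * c * Real.exp (Lam * c)) := by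
      rw [hc]; ring
    rw [h3]
    linarith
  have hother : ∀ j, j ≠ j0 → q j * f j * Real.exp (-Lam * f j) ≤ q j * max (f j) 0 := by
    intro j _
    rcases le_or_gt (f j) 0 with hf | hf
    · have : q j * f j * Real.exp (-Lam * f j) ≤ 0 := by
        apply mul_nonpos_of_nonpos_of_nonneg
        · exact mul_nonpos_of_nonneg_of_nonpos (hq0 j).le hf
        · exact (Real.exp_pos _).le
      exact this.trans (mul_nonneg (hq0 j).le (le_max_right _ _))
    · have hexple : Real.exp (-Lam * f j) ≤ 1 := by
        rw [Real.exp_le_one_iff]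
        nlinarith
      have : q j * f j * Real.exp (-Lam * f j) ≤ q j * f j := by
        have h5 := mul_le_mul_of_nonneg_left hexple (mul_nonneg (hq0 j).le hf.le)
        simpa using h5
      refine this.trans ?_
      exact mul_le_mul_of_nonneg_left (le_max_left _ _) (hq0 j).le
  have hhLam : h Lam < 0 := by
    have hsplit : h Lam = q j0 * f j0 * Real.exp (-Lam * f j0)
        + ∑ j ∈ Finset.univ.erase j0, q j * f j * Real.exp (-Lam * f j) := by
      rw [hh]
      exact (Finset.add_sum_erase _ _ (Finset.mem_univ j0)).symm
    have hsum2 : ∑ j ∈ Finset.univ.erase j0, q j * f j * Real.exp (-Lam * f j) ≤ S := by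
      calc ∑ j ∈ Finset.univ.erase j0, q j * f j * Real.exp (-Lam * f j)
          ≤ ∑ j ∈ Finset.univ.erase j0, q j * max (f j) 0 :=
            Finset.sum_le_sum fun j hj => hother j (Finset.ne_of_mem_erase hj)
        _ ≤ S := Finset.sum_le_sum_of_subset_of_nonneg (Finset.erase_subset _ _)
            (fun j _ _ => mul_nonneg (hq0 j).le (le_max_right _ _))
    rw [hsplit]
    linarith
  -- intermediate value theorem
  have hmem : (0:ℝ) ∈ Set.Icc (h Lam) (h 0) := ⟨hhLam.le, h0pos.le⟩
  obtain ⟨lam, hlamIcc, hlameq⟩ :=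
    intermediate_value_Icc' hLam0 hcont.continuousOn hmem
  exact ⟨lam, hlamIcc.1, hlameq⟩


lemma perK_bound (p : Fin K → ℝ) (hp : ∀ k, 0 < p k) (hpsum : ∑ k, p k = 1)
    (W : Matrix (Fin K) (Fin K) ℝ) (hW0 : ∀ i j, 0 ≤ W i j)
    (hWrow : ∀ i, ∑ j, W i j = 1) (hWinvrow : ∀ i, ∑ j, W⁻¹ i j = 1)
    (hWW : W⁻¹ * W = 1)
    (hq0 : ∀ j, 0 < Matrix.vecMul p W j) (hq1 : ∑ j, Matrix.vecMul p W j = 1)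
    (hpW : ∀ k, ∑ j, Matrix.vecMul p W j * W⁻¹ j k = p k)
    (k : Fin K) (n : ℕ) :
    iidP (Matrix.vecMul p W) n {y | ∑ i, W⁻¹ (y i) k < 0}
      ≤ Real.exp (-(n : ℝ) * Dbnd p W) := by
  classical
  set q : Fin K → ℝ := Matrix.vecMul p W with hqdef
  by_cases hneg : ∃ j, W⁻¹ j k < 0
  · obtain ⟨j0, hj0⟩ := hneg
    have hmean : 0 < ∑ j, q j * W⁻¹ j k := by rw [hpW k]; exact hp k
    obtain ⟨lam, hlam0, htilt⟩ := exists_tilt q (fun j => W⁻¹ j k) hq0 hmean j0 hj0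
    set M : ℝ := ∑ j, q j * Real.exp (-lam * W⁻¹ j k) with hM
    have hMpos : 0 < M :=
      Finset.sum_pos (fun j _ => mul_pos (hq0 j) (Real.exp_pos _)) ⟨k, Finset.mem_univ k⟩
    set s : Fin K → ℝ := fun j => q j * Real.exp (-lam * W⁻¹ j k) / M with hs
    have hs0 : ∀ j, 0 < s j := fun j => div_pos (mul_pos (hq0 j) (Real.exp_pos _)) hMpos
    have hs1 : ∑ j, s j = 1 := by
      rw [hs, ← Finset.sum_div, ← hM, div_self hMpos.ne']
    have hsf : ∑ j, s j * W⁻¹ j k = 0 := by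
      have hterm : ∀ j : Fin K, s j * W⁻¹ j k
          = (q j * W⁻¹ j k * Real.exp (-lam * W⁻¹ j k)) / M := by
        intro j; rw [hs]; ring
      rw [Finset.sum_congr rfl fun j _ => hterm j, ← Finset.sum_div, htilt, zero_div]
    have hrk : Matrix.vecMul s W⁻¹ k = 0 := by
      have : Matrix.vecMul s W⁻¹ k = ∑ j, s j * W⁻¹ j k := by
        simp [Matrix.vecMul, dotProduct]
      rw [this, hsf]
    have hKLeq : KL s q = - Real.log M := by
      unfold KL
      have hterm : ∀ j : Fin K, s j * Real.log (s j / q j)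
          = s j * (-lam * W⁻¹ j k) - Real.log M * s j := by
        intro j
        have hsq : s j / q j = Real.exp (-lam * W⁻¹ j k) / M := by
          have hsval : s j = q j * (Real.exp (-lam * W⁻¹ j k) / M) := by rw [hs]; ring
          rw [hsval]
          exact mul_div_cancel_left₀ _ (hq0 j).ne'
        rw [hsq, Real.log_div (Real.exp_ne_zero _) hMpos.ne', Real.log_exp]
        ring
      rw [Finset.sum_congr rfl fun j _ => hterm j, Finset.sum_sub_distrib]
      have h1 : ∑ j, s j * (-lam * W⁻¹ j k) = -lam * ∑ j, s j * W⁻¹ j k := by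
        rw [Finset.mul_sum]
        exact Finset.sum_congr rfl fun j _ => by ring
      rw [h1, hsf, mul_zero, zero_sub, ← Finset.mul_sum, hs1, mul_one]
    have hD : Dbnd p W ≤ KL s q :=
      Dbnd_le_KL p hp hpsum W hW0 hWrow hWinvrow hWW hq0 s hs0 hs1 k hrk
    have hKLnn : 0 ≤ KL s q :=
      KL_nonneg s q (fun j => (hs0 j).le) hq0 (by rw [hs1, hq1])
    have hMle : M ≤ Real.exp (- Dbnd p W) := by
      have hlogM : Real.log M ≤ - Dbnd p W := by rw [hKLeq] at hD; linarith
      calc M = Real.exp (Real.log M) := (Real.exp_log hMpos).symm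
        _ ≤ Real.exp (- Dbnd p W) := Real.exp_le_exp.mpr hlogM
    have hch := chernoff q (fun j => (hq0 j).le) n (fun j => W⁻¹ j k) lam hlam0
    refine hch.trans ?_
    calc (∑ j, q j * Real.exp (-lam * W⁻¹ j k)) ^ n
        ≤ (Real.exp (- Dbnd p W)) ^ n := pow_le_pow_left₀ hMpos.le hMle n
      _ = Real.exp (-(n : ℝ) * Dbnd p W) := by
          rw [← Real.exp_nat_mul]; congr 1; ring
  · push_neg at hneg
    have hzero : iidP q n {y : Fin n → Fin K | ∑ i, W⁻¹ (y i) k < 0} = 0 := by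
      unfold iidP
      refine Finset.sum_eq_zero fun y _ => ?_
      refine if_neg ?_
      intro hy
      exact absurd (Finset.sum_nonneg fun i _ => hneg (y i)) (not_le.mpr hy)
    rw [hzero]
    exact (Real.exp_pos _).le

end Aux

/-- expansion of the MSE loss, with exponentially small remainder. -/
theorem stmt_4 (K : ℕ) (hK : 2 ≤ K)
    (p : Fin K → ℝ) (hp : ∀ k, 0 < p k) (hpsum : ∑ k, p k = 1)
    (W : Matrix (Fin K) (Fin K) ℝ) (hW : RowStochastic W) (hWinv : IsUnit W)
    (Proj : (Fin K → ℝ) → (Fin K → ℝ))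
    (hProjMem : ∀ x, Proj x ∈ simplex K)
    (hProjFix : ∀ x ∈ simplex K, Proj x = x) :
    (fun n : ℕ =>
        iidE (Matrix.vecMul p W) n
            (fun y => ∑ k, (Proj (Matrix.vecMul (empDist y) W⁻¹) k - p k) ^ 2)
          - (1 / n) * ∑ k, (nu p W 2 k - p k ^ 2))
      =O[atTop] fun n : ℕ => Real.exp (-(n : ℝ) * Dbnd p W) := by
  classical
  have hWdet : IsUnit W.det := (Matrix.isUnit_iff_isUnit_det W).mp hWinv
  have hWW : W⁻¹ * W = 1 := Matrix.nonsing_inv_mul W hWdet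
  have hWWinv : W * W⁻¹ = 1 := Matrix.mul_nonsing_inv W hWdet
  have hvecM : ∀ (v : Fin K → ℝ) (M : Matrix (Fin K) (Fin K) ℝ) (j : Fin K),
      Matrix.vecMul v M j = ∑ l, v l * M l j := by
    intro v M j; simp [Matrix.vecMul, dotProduct]
  set q : Fin K → ℝ := Matrix.vecMul p W with hqdef
  have hq0 : ∀ j, 0 < q j := by
    intro j
    have hcol : ∃ i, W i j ≠ 0 := by
      by_contra hcol
      push_neg at hcol
      have hdet0 : W.det = 0 := Matrix.det_eq_zero_of_column_eq_zero j hcol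
      rw [hdet0] at hWdet
      exact (isUnit_iff_ne_zero.mp hWdet) rfl
    obtain ⟨i0, hi0⟩ := hcol
    rw [hqdef, hvecM]
    refine Finset.sum_pos' (fun l _ => mul_nonneg (hp l).le (hW.1 l j))
      ⟨i0, Finset.mem_univ i0, ?_⟩
    exact mul_pos (hp i0) (lt_of_le_of_ne (hW.1 i0 j) (Ne.symm hi0))
  have hWinvrow : ∀ i, ∑ j, W⁻¹ i j = 1 := by
    intro i
    have hone : W.mulVec (fun _ => 1) = fun _ => 1 := by
      funext i'
      simp [Matrix.mulVec, dotProduct, hW.2 i']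
    have h2 : W⁻¹.mulVec (fun _ => 1) = fun _ => (1:ℝ) := by
      conv_lhs => rw [← hone]
      rw [Matrix.mulVec_mulVec, hWW]
      funext i'
      simp [Matrix.mulVec, dotProduct, Matrix.one_apply]
    have h3 := congrFun h2 i
    simpa [Matrix.mulVec, dotProduct] using h3
  have hq1 : ∑ j, q j = 1 := by
    rw [hqdef]
    simp_rw [hvecM]
    rw [Finset.sum_comm]
    simp_rw [← Finset.mul_sum, hW.2, mul_one]
    exact hpsum
  have hpW : ∀ k, ∑ j, q j * W⁻¹ j k = p k := by
    intro k
    have hqp : Matrix.vecMul q W⁻¹ = p := by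
      rw [hqdef, Matrix.vecMul_vecMul, hWWinv, Matrix.vecMul_one]
    calc ∑ j, q j * W⁻¹ j k = Matrix.vecMul q W⁻¹ k := (hvecM q W⁻¹ k).symm
      _ = p k := by rw [hqp]
  set C2 : ℝ := ∑ k : Fin K, ((∑ j, |W⁻¹ j k|) + 1) ^ 2 with hC2
  set C : ℝ := (K : ℝ) + C2 with hC
  have hC2nn : 0 ≤ C2 := Finset.sum_nonneg fun k _ => sq_nonneg _
  have hKnn : (0:ℝ) ≤ (K:ℝ) := Nat.cast_nonneg K
  have hCnn : 0 ≤ C := by rw [hC]; linarith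
  rw [isBigO_iff]
  refine ⟨C * K, ?_⟩
  filter_upwards [eventually_ge_atTop 1] with n hn
  have hn0 : (0:ℝ) < (n:ℝ) := by exact_mod_cast hn
  set g : (Fin n → Fin K) → ℝ :=
    fun y => ∑ k, (Proj (Matrix.vecMul (empDist y) W⁻¹) k - p k) ^ 2 with hg
  set h : (Fin n → Fin K) → ℝ :=
    fun y => ∑ k, (Matrix.vecMul (empDist y) W⁻¹ k - p k) ^ 2 with hhdef
  have hnu : ∀ k, nu p W 2 k = ∑ j, q j * (W⁻¹ j k) ^ 2 := by
    intro k
    simp only [nu, hqdef]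
  have hE : iidE q n h = (1 / (n:ℝ)) * ∑ k, (nu p W 2 k - p k ^ 2) := by
    rw [hhdef, expectation_unproj n hn q hq1 W⁻¹ p hpW]
    congr 1
  set B : Set (Fin n → Fin K) := {y | Matrix.vecMul (empDist y) W⁻¹ ∉ simplex K} with hB
  have heq : ∀ y, y ∉ B → g y = h y := by
    intro y hy
    simp only [hB, Set.mem_setOf_eq, not_not] at hy
    rw [hg, hhdef]
    dsimp only
    refine Finset.sum_congr rfl fun k _ => ?_
    rw [hProjFix _ hy]
  have hbd : ∀ y, |g y - h y| ≤ C := by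
    intro y
    have hg0 : 0 ≤ g y := Finset.sum_nonneg fun k _ => sq_nonneg _
    have hgK : g y ≤ (K:ℝ) := by
      rw [hg]
      dsimp only
      have hterm : ∀ k : Fin K, (Proj (Matrix.vecMul (empDist y) W⁻¹) k - p k) ^ 2 ≤ 1 := by
        intro k
        obtain ⟨hP0, hP1⟩ := hProjMem (Matrix.vecMul (empDist y) W⁻¹)
        have h1 : Proj (Matrix.vecMul (empDist y) W⁻¹) k ≤ 1 := by
          rw [← hP1]
          exact Finset.single_le_sum (fun l _ => hP0 l) (Finset.mem_univ k)
        have h2 : p k ≤ 1 := by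
          rw [← hpsum]
          exact Finset.single_le_sum (fun l _ => (hp l).le) (Finset.mem_univ k)
        nlinarith [hP0 k, (hp k).le]
      calc ∑ k, (Proj (Matrix.vecMul (empDist y) W⁻¹) k - p k) ^ 2
          ≤ ∑ _k : Fin K, (1:ℝ) := Finset.sum_le_sum fun k _ => hterm k
        _ = (K:ℝ) := by simp
    have hh0 : 0 ≤ h y := Finset.sum_nonneg fun k _ => sq_nonneg _
    have hhC : h y ≤ C2 := by
      rw [hhdef, hC2]
      dsimp only
      refine Finset.sum_le_sum fun k _ => ?_
      have habs : |Matrix.vecMul (empDist y) W⁻¹ k - p k| ≤ (∑ j, |W⁻¹ j k|) + 1 := by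
        have h1 : |Matrix.vecMul (empDist y) W⁻¹ k| ≤ ∑ j, |W⁻¹ j k| := by
          rw [hvecM]
          refine (Finset.abs_sum_le_sum_abs _ _).trans ?_
          refine Finset.sum_le_sum fun j _ => ?_
          rw [abs_mul]
          calc |empDist y j| * |W⁻¹ j k| ≤ 1 * |W⁻¹ j k| := by
                refine mul_le_mul_of_nonneg_right ?_ (abs_nonneg _)
                rw [abs_of_nonneg (emp_nonneg y j)]
                exact emp_le_one y j
            _ = |W⁻¹ j k| := one_mul _
        have h2 : |p k| ≤ 1 := by
          rw [abs_of_pos (hp k), ← hpsum]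
          exact Finset.single_le_sum (fun l _ => (hp l).le) (Finset.mem_univ k)
        calc |Matrix.vecMul (empDist y) W⁻¹ k - p k|
            ≤ |Matrix.vecMul (empDist y) W⁻¹ k| + |p k| := abs_sub _ _
          _ ≤ (∑ j, |W⁻¹ j k|) + 1 := add_le_add h1 h2
      calc (Matrix.vecMul (empDist y) W⁻¹ k - p k) ^ 2
          = |Matrix.vecMul (empDist y) W⁻¹ k - p k| ^ 2 := (sq_abs _).symm
        _ ≤ ((∑ j, |W⁻¹ j k|) + 1) ^ 2 := pow_le_pow_left₀ (abs_nonneg _) habs 2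
    rw [abs_le]
    constructor
    · rw [hC]; linarith
    · rw [hC]; linarith
  have hsub : ∀ y ∈ B, ∃ k : Fin K, y ∈ {y : Fin n → Fin K | ∑ i, W⁻¹ (y i) k < 0} := by
    intro y hy
    have hsum1 : ∑ k, Matrix.vecMul (empDist y) W⁻¹ k = 1 := by
      simp_rw [hvecM]
      rw [Finset.sum_comm]
      simp_rw [← Finset.mul_sum, hWinvrow, mul_one]
      exact emp_sum hn y
    have hnot : ¬ (∀ k, 0 ≤ Matrix.vecMul (empDist y) W⁻¹ k) := by
      intro hall
      exact hy ⟨hall, hsum1⟩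
    push_neg at hnot
    obtain ⟨k, hk⟩ := hnot
    refine ⟨k, ?_⟩
    have h2 : Matrix.vecMul (empDist y) W⁻¹ k = (1 / (n:ℝ)) * ∑ i, W⁻¹ (y i) k :=
      emp_vecMul y W⁻¹ k
    rw [h2] at hk
    show ∑ i, W⁻¹ (y i) k < 0
    by_contra hge
    push_neg at hge
    have : 0 ≤ (1 / (n:ℝ)) * ∑ i, W⁻¹ (y i) k :=
      mul_nonneg (by positivity) hge
    linarith
  have hstep1 : |iidE q n g - iidE q n h| ≤ C * iidP q n B :=
    abs_iidE_sub_le q (fun j => (hq0 j).le) n g h B C heq hbd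
  have hstep2 : iidP q n B ≤ ∑ k : Fin K, iidP q n {y | ∑ i, W⁻¹ (y i) k < 0} :=
    iidP_le_sum q (fun j => (hq0 j).le) n B _ hsub
  have hstep3 : ∑ k : Fin K, iidP q n {y | ∑ i, W⁻¹ (y i) k < 0}
      ≤ (K:ℝ) * Real.exp (-(n:ℝ) * Dbnd p W) := by
    calc ∑ k : Fin K, iidP q n {y | ∑ i, W⁻¹ (y i) k < 0}
        ≤ ∑ _k : Fin K, Real.exp (-(n:ℝ) * Dbnd p W) :=
          Finset.sum_le_sum fun k _ =>
            perK_bound p hp hpsum W hW.1 hW.2 hWinvrow hWW hq0 hq1 hpW k n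
      _ = (K:ℝ) * Real.exp (-(n:ℝ) * Dbnd p W) := by
          rw [Finset.sum_const, Finset.card_univ, Fintype.card_fin, nsmul_eq_mul]
  have hP0 : 0 ≤ iidP q n B := by
    unfold iidP
    refine Finset.sum_nonneg fun y _ => ?_
    split
    · exact Finset.prod_nonneg fun i _ => (hq0 (y i)).le
    · exact le_refl 0
  rw [Real.norm_eq_abs, Real.norm_eq_abs]
  calc |iidE q n g - 1 / (n:ℝ) * ∑ k, (nu p W 2 k - p k ^ 2)|
      = |iidE q n g - iidE q n h| := by rw [hE]
    _ ≤ C * iidP q n B := hstep1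
    _ ≤ C * ((K:ℝ) * Real.exp (-(n:ℝ) * Dbnd p W)) :=
        mul_le_mul_of_nonneg_left (hstep2.trans hstep3) hCnn
    _ ≤ C * (K:ℝ) * |Real.exp (-(n:ℝ) * Dbnd p W)| := by
        rw [abs_of_pos (Real.exp_pos _)]
        ring_nf
        exact le_refl _


end RRStmt
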